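/- Let K ≥ 1 and c ≥ 1 be real numbers. Suppose that for every m ≥ 1 and every nonempty shift-minimal downset B ⊆ F_2^m with |B + B| ≤ K·|B| there exists an affine subspace of F_2^m of cardinality at most c·|B| containing B. Then for every n ≥ 1 and every nonempty set A ⊆ F_2^n with |A + A| ≤ K·|A| there exists an affine subspace of F_2^n of cardinality at most c·|A| containing A. -/

import Mathlib

open Finset Pointwise

abbrev F2 (n : ℕ) := Fin n → ZMod 2

/-- The standard basis vector `e i` of `F_2^n`. -/
def stdBasis {n : ℕ} (i : Fin n) : F2 n := Pi.single i 1

/-- `A` is a downset: whenever `x i = 0` and `x + e i ∈ A`, also `x ∈ A`. -/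
def IsDownset {n : ℕ} (A : Finset (F2 n)) : Prop :=
  ∀ x : F2 n, ∀ i : Fin n, x i = 0 → x + stdBasis i ∈ A → x ∈ A

/-- `A` is shift-minimal: whenever `i < j`, `x i = x j = 0` and `x + e j ∈ A`,
also `x + e i ∈ A`. -/
def IsShiftMinimal {n : ℕ} (A : Finset (F2 n)) : Prop :=
  ∀ x : F2 n, ∀ i j : Fin n, i < j → x i = 0 → x j = 0 →
    x + stdBasis j ∈ A → x + stdBasis i ∈ A

/-- The Hamming ball of radius `r` in `F_2^n`. -/
def hamBall (n r : ℕ) : Finset (F2 n) := Finset.univ.filter fun x => hammingNorm x ≤ r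

namespace Freiman

variable {n : ℕ}

lemma z2cases (a : ZMod 2) : a = 0 ∨ a = 1 := by revert a; decide

lemma addv (x v : F2 n) : x + v + v = x := by
  funext k
  have : ∀ a b : ZMod 2, a + b + b = a := by decide
  simpa using this (x k) (v k)

lemma F2.add_self (x : F2 n) : x + x = 0 := by
  funext k
  have : ∀ a : ZMod 2, a + a = 0 := by decide
  simpa using this (x k)

lemma F2.neg_eq (x : F2 n) : -x = x := by
  funext k
  have : ∀ a : ZMod 2, -a = a := by decide
  simpa using this (x k)

lemma stdBasis_apply_self (j : Fin n) : stdBasis j j = 1 := by simp [stdBasis]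

lemma stdBasis_apply_ne {k j : Fin n} (h : k ≠ j) : stdBasis k j = 0 := by
  simp [stdBasis, Pi.single_apply, h.symm]

/-- generalized two-point compression along `v`, preferring the element with `j`-coordinate 0. -/
def comp (v : F2 n) (j : Fin n) (A : Finset (F2 n)) : Finset (F2 n) :=
  Finset.univ.filter fun x => if x j = 0 then (x ∈ A ∨ x + v ∈ A) else (x ∈ A ∧ x + v ∈ A)

lemma mem_comp {v : F2 n} {j : Fin n} {A : Finset (F2 n)} {x : F2 n} :
    x ∈ comp v j A ↔ if x j = 0 then (x ∈ A ∨ x + v ∈ A) else (x ∈ A ∧ x + v ∈ A) := by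
  simp [comp]

variable {v : F2 n} {j : Fin n} {A B : Finset (F2 n)}

/-- the moving map realizing `comp` as an image of `A`. -/
noncomputable def cmap (v : F2 n) (j : Fin n) (A : Finset (F2 n)) (x : F2 n) : F2 n :=
  if x j = 1 ∧ x + v ∉ A then x + v else x

lemma cmap_injOn (hv : v j = 1) : Set.InjOn (cmap v j A) A := by
  intro x hx y hy hxy
  simp only [Finset.mem_coe] at hx hy
  unfold cmap at hxy
  by_cases h1 : x j = 1 ∧ x + v ∉ A <;> by_cases h2 : y j = 1 ∧ y + v ∉ A
  · rw [if_pos h1, if_pos h2] at hxy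
    rw [← addv x v, hxy, addv]
  · rw [if_pos h1, if_neg h2] at hxy
    exact absurd (hxy ▸ hy) h1.2
  · rw [if_neg h1, if_pos h2] at hxy
    exact absurd (hxy ▸ hx) h2.2
  · rwa [if_neg h1, if_neg h2] at hxy

lemma comp_eq_image (hv : v j = 1) : comp v j A = A.image (cmap v j A) := by
  have hne : (0 : ZMod 2) ≠ 1 := by decide
  have h11 : (1 : ZMod 2) + 1 = 0 := by decide
  ext y
  rw [mem_comp, Finset.mem_image]
  constructor
  · intro hy
    rcases z2cases (y j) with h0 | h1
    · rw [if_pos h0] at hy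
      by_cases hyA : y ∈ A
      · exact ⟨y, hyA, by unfold cmap; rw [if_neg (by simp [h0, hne])]⟩
      · have hyv : y + v ∈ A := hy.resolve_left hyA
        refine ⟨y + v, hyv, ?_⟩
        unfold cmap
        rw [if_pos ⟨by simp [Pi.add_apply, h0, hv], by rwa [addv]⟩, addv]
    · rw [if_neg (by simp [h1, hne])] at hy
      exact ⟨y, hy.1, by unfold cmap; rw [if_neg (by simp [hy.2])]⟩
  · rintro ⟨x, hx, rfl⟩
    unfold cmap
    by_cases hm : x j = 1 ∧ x + v ∉ A
    · rw [if_pos hm]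
      rw [if_pos (by simp [Pi.add_apply, hm.1, hv, h11])]
      right; rwa [addv]
    · rw [if_neg hm]
      rcases z2cases (x j) with h0 | h1
      · rw [if_pos h0]; exact Or.inl hx
      · rw [if_neg (by simp [h1, hne])]
        exact ⟨hx, by push_neg at hm; exact hm h1⟩

lemma card_comp (hv : v j = 1) : (comp v j A).card = A.card := by
  rw [comp_eq_image hv, Finset.card_image_of_injOn (cmap_injOn hv)]

lemma comp_add_subset (hv : v j = 1) :
    comp v j A + comp v j B ⊆ comp v j (A + B) := by
  have hvv : v + v = 0 := F2.add_self v
  have h11 : (1 : ZMod 2) + 1 = 0 := by decide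
  have hne : (0 : ZMod 2) ≠ 1 := by decide
  intro z hz
  rw [Finset.mem_add] at hz
  obtain ⟨a, ha, b, hb, rfl⟩ := hz
  rw [mem_comp] at ha hb ⊢
  have hab : ∀ x y : F2 n, x ∈ A → y ∈ B → x + y ∈ A + B := fun x y hx hy =>
    Finset.add_mem_add hx hy
  have e1 : a + v + (b + v) = a + b := by
    rw [show a + v + (b + v) = a + b + (v + v) by abel, hvv, add_zero]
  have e2 : a + v + b = a + b + v := by abel
  have e3 : a + (b + v) = a + b + v := by abel
  rcases z2cases (a j) with ha0 | ha1 <;> rcases z2cases (b j) with hb0 | hb1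
  · rw [if_pos ha0] at ha
    rw [if_pos hb0] at hb
    rw [if_pos (by simp [Pi.add_apply, ha0, hb0])]
    rcases ha with ha | ha <;> rcases hb with hb | hb
    · exact Or.inl (hab _ _ ha hb)
    · exact Or.inr (e3 ▸ hab _ _ ha hb)
    · exact Or.inr (e2 ▸ hab _ _ ha hb)
    · exact Or.inl (e1 ▸ hab _ _ ha hb)
  · rw [if_pos ha0] at ha
    rw [if_neg (by simp [hb1, hne])] at hb
    rw [if_neg (by simp [Pi.add_apply, ha0, hb1, hne])]
    rcases ha with ha | ha
    · exact ⟨hab _ _ ha hb.1, e3 ▸ hab _ _ ha hb.2⟩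
    · exact ⟨e1 ▸ hab _ _ ha hb.2, e2 ▸ hab _ _ ha hb.1⟩
  · rw [if_neg (by simp [ha1, hne])] at ha
    rw [if_pos hb0] at hb
    rw [if_neg (by simp [Pi.add_apply, ha1, hb0, hne])]
    rcases hb with hb | hb
    · exact ⟨hab _ _ ha.1 hb, e2 ▸ hab _ _ ha.2 hb⟩
    · exact ⟨e1 ▸ hab _ _ ha.2 hb, e3 ▸ hab _ _ ha.1 hb⟩
  · rw [if_neg (by simp [ha1, hne])] at ha
    rw [if_neg (by simp [hb1, hne])] at hb
    rw [if_pos (by simp [Pi.add_apply, ha1, hb1, h11])]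
    exact Or.inl (hab _ _ ha.1 hb.1)

lemma card_comp_add (hv : v j = 1) :
    (comp v j A + comp v j A).card ≤ (A + A).card := by
  calc (comp v j A + comp v j A).card ≤ (comp v j (A + A)).card :=
        Finset.card_le_card (comp_add_subset hv)
    _ = (A + A).card := card_comp hv

def w (x : F2 n) : ℕ := ∑ k : Fin n, (x k).val * 2 ^ (k : ℕ)

def μ (A : Finset (F2 n)) : ℕ := ∑ x ∈ A, w x

def Good (v : F2 n) (j : Fin n) : Prop :=
  v = stdBasis j ∨ ∃ i : Fin n, i < j ∧ v = stdBasis i + stdBasis j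

lemma Good.vj (hg : Good v j) : v j = 1 := by
  rcases hg with rfl | ⟨i, hij, rfl⟩
  · exact stdBasis_apply_self j
  · simp [Pi.add_apply, stdBasis_apply_self, stdBasis_apply_ne (ne_of_lt hij)]

lemma w_lt_basis (j : Fin n) (x : F2 n) (hx : x j = 1) : w (x + stdBasis j) < w x := by
  have h1 : (1 : ZMod 2).val = 1 := rfl
  have h0' : (0 : ZMod 2).val = 0 := rfl
  unfold w
  apply Finset.sum_lt_sum
  · intro k _
    by_cases hk : k = j
    · subst hk
      have hz : x k + stdBasis k k = 0 := by rw [stdBasis_apply_self, hx]; decide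
      rw [Pi.add_apply, hz]
      simp
    · rw [Pi.add_apply, stdBasis_apply_ne (Ne.symm hk), add_zero]
  · refine ⟨j, Finset.mem_univ j, ?_⟩
    have hz : x j + stdBasis j j = 0 := by rw [stdBasis_apply_self, hx]; decide
    rw [Pi.add_apply, hz, hx, h1, h0']
    simpa using Nat.two_pow_pos (j : ℕ)

lemma w_lt_pair {i j : Fin n} (hij : i < j) (x : F2 n) (hx : x j = 1) :
    w (x + (stdBasis i + stdBasis j)) < w x := by
  have hne : i ≠ j := ne_of_lt hij
  have h1 : (1 : ZMod 2).val = 1 := rfl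
  have h0' : (0 : ZMod 2).val = 0 := rfl
  have hval : ∀ a : ZMod 2, (a + 1).val ≤ a.val + 1 := by decide
  have hs : ∀ (c : Fin n), (∑ k : Fin n, if k = c then 2 ^ (c : ℕ) else 0) = 2 ^ (c : ℕ) := by
    intro c; simp
  have key : w (x + (stdBasis i + stdBasis j)) + 2 ^ (j : ℕ) ≤ w x + 2 ^ (i : ℕ) := by
    unfold w
    rw [← hs j, ← hs i, ← Finset.sum_add_distrib, ← Finset.sum_add_distrib]
    apply Finset.sum_le_sum
    intro k _
    by_cases hkj : k = j
    · have hkij : k ≠ i := by rw [hkj]; exact Ne.symm hne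
      have hz : (x + (stdBasis i + stdBasis j)) k = 0 := by
        simp only [Pi.add_apply]
        rw [hkj, stdBasis_apply_ne hne, stdBasis_apply_self, hx]
        decide
      rw [hz, if_pos hkj, if_neg hkij, hkj, hx, h1, h0']
      simp
    · by_cases hki : k = i
      · have hz : (x + (stdBasis i + stdBasis j)) k = x k + 1 := by
          simp only [Pi.add_apply]
          rw [hki, stdBasis_apply_self, stdBasis_apply_ne (Ne.symm hne), add_zero]
      -- goal after rws below: (x i + 1).val * 2^i ≤ (x i).val * 2^i + 2^i
        rw [hz, if_neg hkj, if_pos hki, add_zero, hki]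
        exact le_trans (Nat.mul_le_mul_right _ (hval _)) (by rw [add_mul, one_mul])
      · have hz : (x + (stdBasis i + stdBasis j)) k = x k := by
          simp only [Pi.add_apply]
          rw [stdBasis_apply_ne (Ne.symm hki), stdBasis_apply_ne (Ne.symm hkj), add_zero, add_zero]
        rw [hz, if_neg hkj, if_neg hki]
  have hpow : 2 ^ (i : ℕ) < 2 ^ (j : ℕ) := Nat.pow_lt_pow_right (by norm_num) hij
  omega

lemma w_lt (hg : Good v j) (x : F2 n) (hx : x j = 1) : w (x + v) < w x := by
  rcases hg with rfl | ⟨i, hij, rfl⟩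
  · exact w_lt_basis j x hx
  · exact w_lt_pair hij x hx

lemma mu_comp_lt (hg : Good v j) (hne : comp v j A ≠ A) : μ (comp v j A) < μ A := by
  have hv := hg.vj
  have hmove : ∃ x ∈ A, x j = 1 ∧ x + v ∉ A := by
    by_contra hno
    push_neg at hno
    apply hne
    rw [comp_eq_image hv]
    rw [show A.image (cmap v j A) = A.image id from
      Finset.image_congr (fun x hx => by
        unfold cmap
        rw [if_neg]
        · rfl
        · rintro ⟨h1, h2⟩; exact h2 (hno x hx h1))]
    exact Finset.image_id
  unfold μ
  rw [comp_eq_image hv, Finset.sum_image (fun x hx y hy hxy => cmap_injOn hv hx hy hxy)]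
  apply Finset.sum_lt_sum
  · intro x _
    unfold cmap
    split
    · next hcond => exact le_of_lt (w_lt hg x hcond.1)
    · exact le_refl _
  · obtain ⟨x, hxA, hx1, hxv⟩ := hmove
    refine ⟨x, hxA, ?_⟩
    unfold cmap
    rw [if_pos ⟨hx1, hxv⟩]
    exact w_lt hg x hx1

def Inv (d : ℕ) (A : Finset (F2 n)) : Prop :=
  (0 : F2 n) ∈ A ∧ ∀ k : Fin n, (k : ℕ) < d → stdBasis k ∈ A

lemma inv_comp {d : ℕ} (hg : Good v j) (hA : Inv d A) : Inv d (comp v j A) := by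
  have hne01 : (1 : ZMod 2) ≠ 0 := by decide
  constructor
  · rw [mem_comp, if_pos (by simp)]
    exact Or.inl hA.1
  · intro k hk
    rw [mem_comp]
    by_cases hkj : k = j
    · subst hkj
      rw [if_neg (by rw [stdBasis_apply_self]; exact hne01)]
      refine ⟨hA.2 k hk, ?_⟩
      rcases hg with rfl | ⟨i, hij, rfl⟩
      · rw [F2.add_self]
        exact hA.1
      · rw [show stdBasis k + (stdBasis i + stdBasis k) = stdBasis i + (stdBasis k + stdBasis k)
          by abel, F2.add_self, add_zero]
        exact hA.2 i (Nat.lt_trans (Fin.lt_def.mp hij) hk)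
    · rw [if_pos (stdBasis_apply_ne hkj)]
      exact Or.inl (hA.2 k hk)

lemma downset_of_fix (hfix : ∀ j : Fin n, comp (stdBasis j) j A = A) : IsDownset A := by
  intro x i hxi hxA
  rw [← hfix i, mem_comp, if_pos hxi]
  exact Or.inr hxA

lemma shiftmin_of_fix
    (hfix : ∀ i j : Fin n, i < j → comp (stdBasis i + stdBasis j) j A = A) :
    IsShiftMinimal A := by
  intro x i j hij hxi hxj hxe
  have hijne : i ≠ j := ne_of_lt hij
  rw [← hfix i j hij, mem_comp]
  rw [if_pos (by simp [Pi.add_apply, hxj, stdBasis_apply_ne hijne])]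
  right
  rw [show x + stdBasis i + (stdBasis i + stdBasis j)
      = x + stdBasis j + (stdBasis i + stdBasis i) by abel, F2.add_self, add_zero]
  exact hxe

lemma not_fix {A : Finset (F2 n)}
    (h : ¬((∀ j : Fin n, comp (stdBasis j) j A = A) ∧
      (∀ i j : Fin n, i < j → comp (stdBasis i + stdBasis j) j A = A))) :
    ∃ v j, Good v j ∧ comp v j A ≠ A := by
  rw [not_and_or] at h
  rcases h with h | h
  · push_neg at h
    obtain ⟨j, hj⟩ := h
    exact ⟨_, j, Or.inl rfl, hj⟩
  · push_neg at h
    obtain ⟨i, j, hij, hj⟩ := h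
    exact ⟨_, j, Or.inr ⟨i, hij, rfl⟩, hj⟩

lemma exists_smd (d : ℕ) : ∀ (N : ℕ) (A : Finset (F2 n)), μ A ≤ N → Inv d A →
    ∃ B : Finset (F2 n), B.card = A.card ∧ (B + B).card ≤ (A + A).card ∧ Inv d B ∧
      IsDownset B ∧ IsShiftMinimal B := by
  intro N
  induction N with
  | zero =>
    intro A hμ hInv
    by_cases hfix : (∀ j : Fin n, comp (stdBasis j) j A = A) ∧
      (∀ i j : Fin n, i < j → comp (stdBasis i + stdBasis j) j A = A)
    · exact ⟨A, rfl, le_refl _, hInv, downset_of_fix hfix.1, shiftmin_of_fix hfix.2⟩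
    · obtain ⟨v, j, hg, hne⟩ := not_fix hfix
      exact absurd (lt_of_lt_of_le (mu_comp_lt hg hne) hμ) (Nat.not_lt_zero _)
  | succ N ih =>
    intro A hμ hInv
    by_cases hfix : (∀ j : Fin n, comp (stdBasis j) j A = A) ∧
      (∀ i j : Fin n, i < j → comp (stdBasis i + stdBasis j) j A = A)
    · exact ⟨A, rfl, le_refl _, hInv, downset_of_fix hfix.1, shiftmin_of_fix hfix.2⟩
    · obtain ⟨v, j, hg, hne⟩ := not_fix hfix
      have hlt := mu_comp_lt hg hne
      obtain ⟨B, h1, h2, h3, h4, h5⟩ := ih (comp v j A) (by omega) (inv_comp hg hInv)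
      exact ⟨B, h1.trans (card_comp hg.vj), h2.trans (card_comp_add hg.vj), h3, h4, h5⟩

lemma compress (d : ℕ) (A : Finset (F2 n)) (hInv : Inv d A) :
    ∃ B : Finset (F2 n), B.card = A.card ∧ (B + B).card ≤ (A + A).card ∧ Inv d B ∧
      IsDownset B ∧ IsShiftMinimal B :=
  exists_smd d (μ A) A le_rfl hInv

open Module Submodule in
lemma exists_normalize (A₀ : Finset (F2 n)) :
    ∃ (L : F2 n ≃ₗ[ZMod 2] F2 n) (d : ℕ),
      Module.finrank (ZMod 2) (span (ZMod 2) (A₀ : Set (F2 n))) = d ∧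
      d ≤ n ∧
      ∀ k : Fin n, (k : ℕ) < d → ∃ x ∈ A₀, L x = stdBasis k := by
  classical
  obtain ⟨s, hsA, hspan, hli⟩ := exists_linearIndependent (ZMod 2) ((A₀ : Set (F2 n)))
  have hsfin : s.Finite := A₀.finite_toSet.subset hsA
  haveI := hsfin.fintype
  set bset := (show LinearIndepOn (ZMod 2) id s from hli).extend (Set.subset_univ s) with hbset
  have hsub : s ⊆ bset := (show LinearIndepOn (ZMod 2) id s from hli).subset_extend _
  let bb : Basis bset (ZMod 2) (F2 n) := Basis.extend (show LinearIndepOn (ZMod 2) id s from hli)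
  haveI : Fintype bset := (Set.toFinite bset).fintype
  have hcardb : Fintype.card bset = n := by
    have h1 := Module.finrank_eq_card_basis bb
    rw [Module.finrank_pi (ZMod 2), Fintype.card_fin] at h1
    omega
  set p : bset → Prop := fun y => (y : F2 n) ∈ s with hp
  set d := Fintype.card {y : bset // p y} with hd
  set d2 := Fintype.card {y : bset // ¬ p y} with hd2
  have hdn : d + d2 = n := by
    rw [hd, hd2, ← Fintype.card_sum, Fintype.card_congr (Equiv.sumCompl p), hcardb]
  let e : bset ≃ Fin n :=
    (Equiv.sumCompl p).symm.trans
      (((Fintype.equivFin _).sumCongr (Fintype.equivFin _)).trans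
        (finSumFinEquiv.trans (finCongr hdn)))
  have he_pos : ∀ (y : bset) (hy : p y), ((e y : Fin n) : ℕ) < d := by
    intro y hy
    show ((finCongr hdn) (finSumFinEquiv
      (((Fintype.equivFin _).sumCongr (Fintype.equivFin _)) ((Equiv.sumCompl p).symm y))) : ℕ) < d
    rw [Equiv.sumCompl_symm_apply_of_pos (p := p) hy]
    simp only [Equiv.sumCongr_apply, Sum.map_inl, finSumFinEquiv_apply_left, finCongr_apply_coe,
      Fin.coe_castAdd]
    exact (Fintype.equivFin {y : bset // p y} ⟨y, hy⟩).isLt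
  have he_neg : ∀ (y : bset) (hy : ¬ p y), d ≤ ((e y : Fin n) : ℕ) := by
    intro y hy
    show d ≤ ((finCongr hdn) (finSumFinEquiv
      (((Fintype.equivFin _).sumCongr (Fintype.equivFin _)) ((Equiv.sumCompl p).symm y))) : ℕ)
    rw [Equiv.sumCompl_symm_apply_of_neg (p := p) hy]
    simp only [Equiv.sumCongr_apply, Sum.map_inr, finSumFinEquiv_apply_right, finCongr_apply_coe,
      Fin.coe_natAdd]
    exact Nat.le_add_right _ _
  refine ⟨(bb.reindex e).equiv (Pi.basisFun (ZMod 2) (Fin n)) (Equiv.refl _), d, ?_, ?_, ?_⟩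
  · -- finrank of span A₀ = d
    have h1 : span (ZMod 2) (A₀ : Set (F2 n)) = span (ZMod 2) s := hspan.symm
    rw [h1, ← Subtype.range_coe (s := s), finrank_span_eq_card hli]
    have eqv : {y : bset // p y} ≃ ↥s :=
      ⟨fun y => ⟨((y : bset) : F2 n), y.2⟩, fun x => ⟨⟨(x : F2 n), hsub x.2⟩, x.2⟩,
        fun y => Subtype.ext (Subtype.ext rfl), fun x => rfl⟩
    exact Fintype.card_congr eqv.symm
  · omega
  · intro k hk
    set y : bset := e.symm k with hy
    have hpy : p y := by
      by_contra hny
      have := he_neg y hny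
      rw [hy, Equiv.apply_symm_apply] at this
      omega
    refine ⟨(y : F2 n), by exact_mod_cast hsA hpy, ?_⟩
    have h2 : ((bb.reindex e) k) = (y : F2 n) := by
      rw [Basis.reindex_apply, ← hy, Basis.extend_apply_self]
    rw [← h2, Basis.equiv_apply, Equiv.refl_apply, Pi.basisFun_apply]
    rfl

lemma card_submodule (W : Submodule (ZMod 2) (F2 n)) :
    Nat.card W = 2 ^ (Module.finrank (ZMod 2) W) := by
  haveI : Fintype W := Fintype.ofFinite _
  rw [Nat.card_eq_fintype_card, Module.card_eq_pow_finrank (K := ZMod 2), ZMod.card]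

end Freiman

open Freiman

/-- Reduction of Freiman's theorem to shift-minimal downsets (Lemma 1.9):
if every nonempty SMD of doubling at most `K` is contained in an affine subspace
of size at most `c` times its cardinality, then so is every nonempty set of
doubling at most `K`. -/
theorem freiman_reduces_to_smd (K c : ℝ) (hK : 1 ≤ K) (hc : 1 ≤ c)
    (h : ∀ m : ℕ, 1 ≤ m → ∀ B : Finset (F2 m), B.Nonempty →
      IsDownset B → IsShiftMinimal B → ((B + B).card : ℝ) ≤ K * B.card →
      ∃ (W : Submodule (ZMod 2) (F2 m)) (t : F2 m),
        (↑B : Set (F2 m)) ⊆ t +ᵥ (W : Set (F2 m)) ∧ (Nat.card W : ℝ) ≤ c * B.card) :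
    ∀ n : ℕ, 1 ≤ n → ∀ A : Finset (F2 n), A.Nonempty →
      ((A + A).card : ℝ) ≤ K * A.card →
      ∃ (W : Submodule (ZMod 2) (F2 n)) (t : F2 n),
        (↑A : Set (F2 n)) ⊆ t +ᵥ (W : Set (F2 n)) ∧ (Nat.card W : ℝ) ≤ c * A.card := by
  
  intro n hn A hA hdub
  classical
  obtain ⟨a, ha⟩ := hA
  set A₀ : Finset (F2 n) := A.image (· + a) with hA₀
  have h0A : (0 : F2 n) ∈ A₀ := Finset.mem_image.mpr ⟨a, ha, F2.add_self a⟩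
  have hcardA₀ : A₀.card = A.card := Finset.card_image_of_injective _ (add_left_injective a)
  have hsumsub : A₀ + A₀ ⊆ A + A := by
    intro z hz
    rw [Finset.mem_add] at hz
    obtain ⟨u, hu, v, hv, rfl⟩ := hz
    rw [hA₀, Finset.mem_image] at hu hv
    obtain ⟨x, hx, rfl⟩ := hu
    obtain ⟨y, hy, rfl⟩ := hv
    have : x + a + (y + a) = x + y := by
      rw [show x + a + (y + a) = x + y + (a + a) by abel, F2.add_self, add_zero]
    rw [this]
    exact Finset.add_mem_add hx hy
  obtain ⟨L, d, hrank, hdn, hbasis⟩ := exists_normalize A₀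
  set B₀ : Finset (F2 n) := A₀.image (fun x => L x) with hB₀
  have hcardB₀ : B₀.card = A.card := by
    rw [hB₀, Finset.card_image_of_injective _ L.injective, hcardA₀]
  have hsumB₀ : (B₀ + B₀).card ≤ (A + A).card := by
    have himg : B₀ + B₀ = (A₀ + A₀).image (fun x => L x) := by
      rw [hB₀]
      have := Finset.image_add (f := L.toLinearMap) (s := A₀) (t := A₀)
      simpa using this.symm
    rw [himg, Finset.card_image_of_injective _ L.injective]
    exact Finset.card_le_card hsumsub
  have hInvB₀ : Inv d B₀ := by
    constructor
    · exact Finset.mem_image.mpr ⟨0, h0A, map_zero L⟩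
    · intro k hk
      obtain ⟨x, hx, hLx⟩ := hbasis k hk
      exact Finset.mem_image.mpr ⟨x, hx, hLx⟩
  obtain ⟨B, hcardB, hsumB, hInvB, hDown, hShift⟩ := compress d B₀ hInvB₀
  have hBne : B.Nonempty := ⟨0, hInvB.1⟩
  have hcardB' : B.card = A.card := hcardB.trans hcardB₀
  have hdubB : ((B + B).card : ℝ) ≤ K * B.card := by
    rw [hcardB']
    calc ((B + B).card : ℝ) ≤ ((B₀ + B₀).card : ℝ) := by exact_mod_cast hsumB
      _ ≤ ((A + A).card : ℝ) := by exact_mod_cast hsumB₀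
      _ ≤ K * A.card := hdub
  obtain ⟨W, t, hBW, hWcard⟩ := h n hn B hBne hDown hShift hdubB
  -- B ⊆ W as sets
  have htW : t ∈ W := by
    obtain ⟨w, hw, hw0⟩ := hBW (Finset.mem_coe.mpr hInvB.1)
    have : t = w := by
      have : t + w = 0 := hw0
      rw [← addv t w, this, zero_add]  -- t = (t + w) + w = 0 + w
    rw [this]; exact hw
  have hBW' : ∀ x ∈ B, x ∈ W := by
    intro x hx
    obtain ⟨w, hw, hwx⟩ := hBW (Finset.mem_coe.mpr hx)
    have : x = t + w := hwx.symm
    rw [this]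
    exact W.add_mem htW hw
  -- the span of the first d standard basis vectors sits inside W
  set g : Fin d → F2 n := fun k => stdBasis (Fin.castLE hdn k) with hg
  have hgW : Submodule.span (ZMod 2) (Set.range g) ≤ W := by
    rw [Submodule.span_le]
    rintro _ ⟨k, rfl⟩
    exact hBW' _ (hInvB.2 (Fin.castLE hdn k) (by simpa using k.isLt))
  have hgli : LinearIndependent (ZMod 2) g := by
    have : g = fun k => Pi.basisFun (ZMod 2) (Fin n) (Fin.castLE hdn k) := by
      funext k
      rw [hg, Pi.basisFun_apply]
      rfl
    rw [this]
    exact (Pi.basisFun (ZMod 2) (Fin n)).linearIndependent.comp _ (Fin.castLE_injective hdn)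
  have hrankg : Module.finrank (ZMod 2) (Submodule.span (ZMod 2) (Set.range g)) = d := by
    rw [finrank_span_eq_card hgli, Fintype.card_fin]
  -- conclude
  refine ⟨Submodule.span (ZMod 2) ((A₀ : Set (F2 n))), a, ?_, ?_⟩
  · intro x hx
    refine ⟨x + a, Submodule.subset_span ?_, ?_⟩
    · exact Finset.mem_coe.mpr (Finset.mem_image.mpr ⟨x, hx, rfl⟩)
    · show a + (x + a) = x
      rw [show a + (x + a) = x + (a + a) by abel, F2.add_self, add_zero]
  · have h1 : Nat.card (Submodule.span (ZMod 2) ((A₀ : Set (F2 n)))) = 2 ^ d := by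
      rw [card_submodule, hrank]
    have h2 : Nat.card (Submodule.span (ZMod 2) (Set.range g)) = 2 ^ d := by
      rw [card_submodule, hrankg]
    have h3 : Nat.card (Submodule.span (ZMod 2) (Set.range g)) ≤ Nat.card W :=
      Nat.card_le_card_of_injective _ (Submodule.inclusion_injective hgW)
    have h4 : (Nat.card (Submodule.span (ZMod 2) ((A₀ : Set (F2 n)))) : ℝ) ≤ Nat.card W := by
      exact_mod_cast h1 ▸ h2 ▸ (Nat.cast_le.mpr h3)
    calc (Nat.card (Submodule.span (ZMod 2) ((A₀ : Set (F2 n)))) : ℝ) ≤ Nat.card W := h4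
      _ ≤ c * B.card := hWcard
      _ = c * A.card := by rw [hcardB']
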